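/- arXiv:1309.6550 — 2 statements merged into one kernel-verified Lean document; each statement's English description precedes it below -/
import Mathlib

section
/- (Reparametrization identity) Let ((b_i), (b_a)) be an interior stationary point of the Bethe free energy of a factor graph G arising from a positive BP fixed point. Then for all x ∈ X^N: ∏_{a∈F} f_a(x_{∂a}) ∏_{i∈V} h_i(x_i) = Z_Bethe · ∏_{a∈F} [b_a(x_{∂a}) / ∏_{i∈∂a} b_i(x_i)] · ∏_{i∈V} b_i(x_i); consequently Z(G) = Z_Bethe · Σ_{x∈X^N} ∏_{a∈F} [b_a(x_{∂a})/∏_{i∈∂a} b_i(x_i)] ∏_{i∈V} b_i(x_i). -/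
open Finset

noncomputable section

variable {V F X : Type*} [Fintype V] [Fintype F] [Fintype X]
  [DecidableEq V] [DecidableEq F] [DecidableEq X]

/-- The factor neighbors of a variable node `i`. -/
def nbrs (N : F → Finset V) (i : V) : Finset F := Finset.univ.filter (fun a => i ∈ N a)

/-- The edge set of the factor graph, as a finset of pairs. -/
def edges (N : F → Finset V) : Finset (V × F) := Finset.univ.filter (fun p => p.1 ∈ N p.2)

/-- The BP normalizer `Z_a = ∑_{x_{∂a}} f_a(x_{∂a}) ∏_{i ∈ ∂a} m_{i→a}(x_i)`. -/
def Za (N : F → Finset V) (f : (a : F) → ({i // i ∈ N a} → X) → ℝ)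
    (mva : V → F → X → ℝ) (a : F) : ℝ :=
  ∑ xa : {i // i ∈ N a} → X, f a xa * ∏ i : {i // i ∈ N a}, mva i.1 a (xa i)

/-- The BP normalizer `Z_i = ∑_x h_i(x) ∏_{a ∈ ∂i} m_{a→i}(x)`. -/
def Zi (N : F → Finset V) (h : V → X → ℝ) (mav : V → F → X → ℝ) (i : V) : ℝ :=
  ∑ x : X, h i x * ∏ a ∈ nbrs N i, mav i a x

/-- The BP normalizer `Z_{i,a} = ∑_x m_{i→a}(x) m_{a→i}(x)`. -/
def Zia (mva mav : V → F → X → ℝ) (i : V) (a : F) : ℝ :=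
  ∑ x : X, mva i a x * mav i a x

/-- The Bethe partition function `Z_Bethe = ∏_a Z_a ∏_i Z_i ∏_{(i,a) ∈ E} Z_{i,a}⁻¹`. -/
def ZBethe (N : F → Finset V) (f : (a : F) → ({i // i ∈ N a} → X) → ℝ)
    (h : V → X → ℝ) (mva mav : V → F → X → ℝ) : ℝ :=
  (∏ a : F, Za N f mva a) * (∏ i : V, Zi N h mav i) *
  ∏ p ∈ edges N, (Zia mva mav p.1 p.2)⁻¹

/-- The factor pseudo-marginal `b_a(x_{∂a}) = f_a(x_{∂a}) ∏_{i ∈ ∂a} m_{i→a}(x_i) / Z_a`. -/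
def bfa (N : F → Finset V) (f : (a : F) → ({i // i ∈ N a} → X) → ℝ)
    (mva : V → F → X → ℝ) (a : F) (xa : {i // i ∈ N a} → X) : ℝ :=
  f a xa * (∏ i : {i // i ∈ N a}, mva i.1 a (xa i)) / Za N f mva a

/-- The variable pseudo-marginal `b_i(x) = h_i(x) ∏_{a ∈ ∂i} m_{a→i}(x) / Z_i`. -/
def bvi (N : F → Finset V) (h : V → X → ℝ) (mav : V → F → X → ℝ) (i : V) (x : X) : ℝ :=
  h i x * (∏ a ∈ nbrs N i, mav i a x) / Zi N h mav i


set_option linter.unusedSectionVars false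
set_option maxHeartbeats 1000000

lemma edges_prod (N : F → Finset V) (g : V × F → ℝ) :
    ∏ p ∈ edges N, g p = ∏ a : F, ∏ i ∈ N a, g (i, a) := by
  rw [edges, Finset.prod_filter, Fintype.prod_prod_type, Finset.prod_comm]
  refine Finset.prod_congr rfl fun a _ => ?_
  simp [Finset.prod_ite_mem]

lemma edges_prod' (N : F → Finset V) (g : V × F → ℝ) :
    ∏ p ∈ edges N, g p = ∏ i : V, ∏ a ∈ nbrs N i, g (i, a) := by
  rw [edges, Finset.prod_filter, Fintype.prod_prod_type]
  refine Finset.prod_congr rfl fun i _ => ?_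
  rw [nbrs, Finset.prod_filter]

lemma sub_prod (N : F → Finset V) (a : F) (g : V → ℝ) :
    ∏ i : {i // i ∈ N a}, g i.1 = ∏ i ∈ N a, g i :=
  (Finset.prod_subtype (N a) (fun _ => Iff.rfl) g).symm

lemma edge_id (N : F → Finset V) (h : V → X → ℝ) (mva mav : V → F → X → ℝ)
    {i : V} {a : F} (hia : i ∈ N a) (hZi : Zi N h mav i ≠ 0)
    (hfix : ∃ c : ℝ, 0 < c ∧ ∀ x,
      mva i a x = c * (h i x * ∏ a' ∈ (nbrs N i).erase a, mav i a' x)) :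
    ∀ z : X, mva i a z * mav i a z = Zia mva mav i a * bvi N h mav i z := by
  obtain ⟨c, hc, hcx⟩ := hfix
  have ha : a ∈ nbrs N i := by simp [nbrs, hia]
  have key : ∀ z, mva i a z * mav i a z
      = c * (h i z * ∏ a' ∈ nbrs N i, mav i a' z) := by
    intro z
    rw [hcx z, ← Finset.prod_erase_mul _ _ ha]
    ring
  have hZia : Zia mva mav i a = c * Zi N h mav i := by
    simp only [Zia, Zi, key, Finset.mul_sum]
  intro z
  rw [key z, hZia, bvi]
  field_simp

/-- **reparametrization identity.**  At an interior stationary point of the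
Bethe free energy coming from a positive BP fixed point,
`∏_a f_a(x_{∂a}) ∏_i h_i(x_i) = Z_Bethe ∏_a [b_a(x_{∂a})/∏_{i∈∂a} b_i(x_i)] ∏_i b_i(x_i)`
for all `x`, and consequently
`Z(G) = Z_Bethe ∑_x ∏_a [b_a(x_{∂a})/∏_{i∈∂a} b_i(x_i)] ∏_i b_i(x_i)`. -/
theorem reparametrization_identity
    (N : F → Finset V)
    (f : (a : F) → ({i // i ∈ N a} → X) → ℝ)
    (h : V → X → ℝ)
    (mva mav : V → F → X → ℝ)
    (hh : ∀ i x, 0 < h i x)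
    (hf : ∀ a xa, 0 ≤ f a xa)
    (hslice : ∀ (a : F) (i : {i // i ∈ N a}) (z : X),
      ∃ xa : {i // i ∈ N a} → X, xa i = z ∧ 0 < f a xa)
    (hm1 : ∀ (i : V) (a : F), i ∈ N a → ∀ x, 0 < mva i a x)
    (hm2 : ∀ (i : V) (a : F), i ∈ N a → ∀ x, 0 < mav i a x)
    (hfix1 : ∀ (i : V) (a : F), i ∈ N a → ∃ c : ℝ, 0 < c ∧ ∀ x,
      mva i a x = c * (h i x * ∏ a' ∈ (nbrs N i).erase a, mav i a' x))
    (hfix2 : ∀ (i : V) (a : F) (hia : i ∈ N a), ∃ c : ℝ, 0 < c ∧ ∀ x,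
      mav i a x = c * ∑ xa ∈ Finset.univ.filter
          (fun xa : {j // j ∈ N a} → X => xa ⟨i, hia⟩ = x),
        f a xa * ∏ j ∈ Finset.univ.erase (⟨i, hia⟩ : {j // j ∈ N a}), mva j.1 a (xa j)) :
    (∀ x : V → X,
      (∏ a : F, f a (fun i => x i.1)) * ∏ i : V, h i (x i)
        = ZBethe N f h mva mav *
          ((∏ a : F, bfa N f mva a (fun i => x i.1) /
              ∏ i : {i // i ∈ N a}, bvi N h mav i.1 (x i.1)) *
            ∏ i : V, bvi N h mav i (x i))) ∧
    (∑ x : V → X, (∏ a : F, f a (fun i => x i.1)) * ∏ i : V, h i (x i)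
      = ZBethe N f h mva mav *
        ∑ x : V → X,
          (∏ a : F, bfa N f mva a (fun i => x i.1) /
              ∏ i : {i // i ∈ N a}, bvi N h mav i.1 (x i.1)) *
            ∏ i : V, bvi N h mav i (x i)) := by
  have main : ∀ x : V → X,
      (∏ a : F, f a (fun i => x i.1)) * ∏ i : V, h i (x i)
        = ZBethe N f h mva mav *
          ((∏ a : F, bfa N f mva a (fun i => x i.1) /
              ∏ i : {i // i ∈ N a}, bvi N h mav i.1 (x i.1)) *
            ∏ i : V, bvi N h mav i (x i)) := by
    intro x
    by_cases hdeg : ∃ a : F, Za N f mva a = 0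
    · -- degenerate case: some Za = 0 forces f a ≡ 0, both sides vanish
      obtain ⟨a, hZa0⟩ := hdeg
      have hterm : ∀ xa : {i // i ∈ N a} → X,
          f a xa * ∏ i : {i // i ∈ N a}, mva i.1 a (xa i) = 0 := by
        have := (Finset.sum_eq_zero_iff_of_nonneg (fun xa _ => by
          exact mul_nonneg (hf a xa) (Finset.prod_nonneg fun i _ =>
            (hm1 i.1 a i.2 (xa i)).le))).mp hZa0
        intro xa; exact this xa (Finset.mem_univ xa)
      have hfz : f a (fun i => x i.1) = 0 := by
        have hp : 0 < ∏ i : {i // i ∈ N a}, mva i.1 a (x i.1) :=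
          Finset.prod_pos fun i _ => hm1 i.1 a i.2 (x i.1)
        have := hterm (fun i => x i.1)
        rcases mul_eq_zero.mp this with h0 | h0
        · exact h0
        · exact absurd h0 hp.ne'
      have hL : (∏ a : F, f a (fun i => x i.1)) = 0 :=
        Finset.prod_eq_zero (Finset.mem_univ a) hfz
      have hZB : ZBethe N f h mva mav = 0 := by
        rw [ZBethe]
        have : (∏ a : F, Za N f mva a) = 0 :=
          Finset.prod_eq_zero (Finset.mem_univ a) hZa0
        rw [this]; ring
      rw [hL, hZB]; ring
    · push_neg at hdeg
      -- positivity facts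
      have hZa : ∀ a : F, Za N f mva a ≠ 0 := hdeg
      have hZi : ∀ i : V, 0 < Zi N h mav i := by
        intro i
        have : Nonempty X := ⟨x i⟩
        refine Finset.sum_pos (fun z _ => ?_) Finset.univ_nonempty
        exact mul_pos (hh i z) (Finset.prod_pos fun a ha => by
          have : i ∈ N a := by simpa [nbrs] using ha
          exact hm2 i a this z)
      have hbvi : ∀ (i : V) (z : X), 0 < bvi N h mav i z := by
        intro i z
        refine div_pos (mul_pos (hh i z) (Finset.prod_pos fun a ha => ?_)) (hZi i)
        have : i ∈ N a := by simpa [nbrs] using ha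
        exact hm2 i a this z
      have hmemE : ∀ p : V × F, p ∈ edges N → p.1 ∈ N p.2 := by
        intro p hp; simpa [edges] using hp
      -- key product identity over edges
      have e4 : (∏ p ∈ edges N, mva p.1 p.2 (x p.1)) *
            ∏ p ∈ edges N, mav p.1 p.2 (x p.1)
          = (∏ p ∈ edges N, Zia mva mav p.1 p.2) *
            ∏ p ∈ edges N, bvi N h mav p.1 (x p.1) := by
        rw [← Finset.prod_mul_distrib, ← Finset.prod_mul_distrib]
        refine Finset.prod_congr rfl fun p hp => ?_
        exact edge_id N h mva mav (hmemE p hp) (hZi p.1).ne'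
          (hfix1 p.1 p.2 (hmemE p hp)) (x p.1)
      -- rewrite each big product
      have eM1 : (∏ a : F, ∏ i : {i // i ∈ N a}, mva i.1 a (x i.1))
          = ∏ p ∈ edges N, mva p.1 p.2 (x p.1) := by
        rw [edges_prod]
        exact Finset.prod_congr rfl fun a _ => sub_prod N a (fun i => mva i a (x i))
      have eM2 : (∏ i : V, ∏ a ∈ nbrs N i, mav i a (x i))
          = ∏ p ∈ edges N, mav p.1 p.2 (x p.1) := (edges_prod' N (fun p => mav p.1 p.2 (x p.1))).symm
      have e1 : (∏ a : F, bfa N f mva a (fun i => x i.1))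
          = ((∏ a : F, f a (fun i => x i.1)) *
              ∏ p ∈ edges N, mva p.1 p.2 (x p.1)) / ∏ a : F, Za N f mva a := by
        simp only [bfa]
        rw [Finset.prod_div_distrib, Finset.prod_mul_distrib, eM1]
      have e2 : (∏ a : F, ∏ i : {i // i ∈ N a}, bvi N h mav i.1 (x i.1))
          = ∏ p ∈ edges N, bvi N h mav p.1 (x p.1) := by
        rw [edges_prod]
        exact Finset.prod_congr rfl fun a _ =>
          sub_prod N a (fun i => bvi N h mav i (x i))
      have e3 : (∏ i : V, bvi N h mav i (x i))
          = ((∏ i : V, h i (x i)) * ∏ p ∈ edges N, mav p.1 p.2 (x p.1)) /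
              ∏ i : V, Zi N h mav i := by
        simp only [bvi]
        rw [Finset.prod_div_distrib, Finset.prod_mul_distrib, eM2]
      have hZE : (∏ p ∈ edges N, Zia mva mav p.1 p.2) ≠ 0 := by
        refine (Finset.prod_ne_zero_iff).mpr fun p hp => ?_
        have hia := hmemE p hp
        have : Nonempty X := ⟨x p.1⟩
        refine (Finset.sum_pos (fun z _ => ?_) Finset.univ_nonempty).ne'
        exact mul_pos (hm1 p.1 p.2 hia z) (hm2 p.1 p.2 hia z)
      have hB : (∏ p ∈ edges N, bvi N h mav p.1 (x p.1)) ≠ 0 :=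
        (Finset.prod_ne_zero_iff).mpr fun p _ => (hbvi p.1 (x p.1)).ne'
      have hZA : (∏ a : F, Za N f mva a) ≠ 0 :=
        (Finset.prod_ne_zero_iff).mpr fun a _ => hZa a
      have hZI : (∏ i : V, Zi N h mav i) ≠ 0 :=
        (Finset.prod_ne_zero_iff).mpr fun i _ => (hZi i).ne'
      rw [ZBethe, Finset.prod_div_distrib, e1, e2, e3, Finset.prod_inv_distrib]
      set Pf := ∏ a : F, f a (fun i => x i.1)
      set Ph := ∏ i : V, h i (x i)
      set M1 := ∏ p ∈ edges N, mva p.1 p.2 (x p.1)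
      set M2 := ∏ p ∈ edges N, mav p.1 p.2 (x p.1)
      set ZA := ∏ a : F, Za N f mva a
      set ZI := ∏ i : V, Zi N h mav i
      set ZE := ∏ p ∈ edges N, Zia mva mav p.1 p.2
      set B := ∏ p ∈ edges N, bvi N h mav p.1 (x p.1)
      field_simp
      linear_combination (-(Pf * Ph)) * e4
  refine ⟨main, ?_⟩
  rw [Finset.mul_sum]
  exact Finset.sum_congr rfl fun x _ => main x
end
end

section
/- (Bethe free energy at a stationary point) Let ((b_i), (b_a)) come from a positive BP fixed point as above. Then F_Bethe((b_i),(b_a)) = −Σ_{a∈F} log Z_a − Σ_{i∈V} log Z_i + Σ_{(i,a)∈E} log Z_{i,a}, where Z_a = Σ_{x_{∂a}∈S_a} f_a(x_{∂a}) ∏_{i∈∂a} m_{i→a}(x_i), Z_i = Σ_x h_i(x) ∏_{a∈∂i} m_{a→i}(x), and Z_{i,a} = Σ_x m_{i→a}(x) m_{a→i}(x). -/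
open Finset

set_option linter.unusedSectionVars false

noncomputable section

variable {V F X : Type*} [Fintype V] [Fintype F] [Fintype X]
  [DecidableEq V] [DecidableEq F] [DecidableEq X]

/-- The Bethe average energy `U_Bethe`, where the factor sums range over the
support `S_a = {x_{∂a} : f_a(x_{∂a}) ≠ 0}`. -/
def UBethe (N : F → Finset V) (f : (a : F) → ({i // i ∈ N a} → X) → ℝ)
    (h : V → X → ℝ) (mva mav : V → F → X → ℝ) : ℝ :=
  - (∑ a : F, ∑ xa ∈ Finset.univ.filter (fun xa : {i // i ∈ N a} → X => f a xa ≠ 0),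
      bfa N f mva a xa * Real.log (f a xa))
  - ∑ i : V, ∑ x : X, bvi N h mav i x * Real.log (h i x)

/-- The Bethe entropy `H_Bethe`. -/
def HBethe (N : F → Finset V) (f : (a : F) → ({i // i ∈ N a} → X) → ℝ)
    (h : V → X → ℝ) (mva mav : V → F → X → ℝ) : ℝ :=
  - (∑ a : F, ∑ xa ∈ Finset.univ.filter (fun xa : {i // i ∈ N a} → X => f a xa ≠ 0),
      bfa N f mva a xa * Real.log (bfa N f mva a xa))
  + ∑ i : V, ((nbrs N i).card - 1 : ℝ) *
      ∑ x : X, bvi N h mav i x * Real.log (bvi N h mav i x)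

-- edge sum conversions
lemma sum_edges_eq_nbrs (N : F → Finset V) (g : V → F → ℝ) :
    ∑ p ∈ edges N, g p.1 p.2 = ∑ i : V, ∑ a ∈ nbrs N i, g i a := by
  rw [edges, sum_filter, Fintype.sum_prod_type]
  exact Fintype.sum_congr _ _ fun i => by rw [nbrs, sum_filter]

lemma sum_edges_eq_fac (N : F → Finset V) (g : V → F → ℝ) :
    ∑ p ∈ edges N, g p.1 p.2 = ∑ a : F, ∑ i ∈ N a, g i a := by
  rw [edges, sum_filter, Fintype.sum_prod_type_right]
  exact Fintype.sum_congr _ _ fun a => by simp [sum_ite_mem]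

section Pos

variable [Nonempty X] (N : F → Finset V) (f : (a : F) → ({i // i ∈ N a} → X) → ℝ)
  (h : V → X → ℝ) (mva mav : V → F → X → ℝ)

lemma Zi_pos (hh : ∀ i x, 0 < h i x)
    (hm2 : ∀ (i : V) (a : F), i ∈ N a → ∀ x, 0 < mav i a x) (i : V) :
    0 < Zi N h mav i := by
  refine Finset.sum_pos (fun x _ => mul_pos (hh i x) (Finset.prod_pos fun a ha => ?_))
    univ_nonempty
  exact hm2 i a (by simpa [nbrs] using ha) x

lemma bvi_pos (hh : ∀ i x, 0 < h i x)
    (hm2 : ∀ (i : V) (a : F), i ∈ N a → ∀ x, 0 < mav i a x) (i : V) (x : X) :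
    0 < bvi N h mav i x := by
  refine div_pos (mul_pos (hh i x) (Finset.prod_pos fun a ha => ?_)) (Zi_pos N h mav hh hm2 i)
  exact hm2 i a (by simpa [nbrs] using ha) x

lemma sum_bvi (hh : ∀ i x, 0 < h i x)
    (hm2 : ∀ (i : V) (a : F), i ∈ N a → ∀ x, 0 < mav i a x) (i : V) :
    ∑ x : X, bvi N h mav i x = 1 := by
  simp only [bvi, ← Finset.sum_div]
  rw [← Zi, div_self (Zi_pos N h mav hh hm2 i).ne']

lemma Za_pos (hf : ∀ a xa, 0 ≤ f a xa)
    (hslice : ∀ (a : F) (i : {i // i ∈ N a}) (z : X),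
      ∃ xa : {i // i ∈ N a} → X, xa i = z ∧ 0 < f a xa)
    (hm1 : ∀ (i : V) (a : F), i ∈ N a → ∀ x, 0 < mva i a x)
    (a : F) (i : V) (hia : i ∈ N a) :
    0 < Za N f mva a := by
  obtain ⟨xa, -, hxa⟩ := hslice a ⟨i, hia⟩ (Classical.arbitrary X)
  refine Finset.sum_pos' (fun ya _ => mul_nonneg (hf a ya)
    (Finset.prod_nonneg fun j _ => (hm1 j.1 a j.2 _).le)) ⟨xa, mem_univ xa, ?_⟩
  exact mul_pos hxa (Finset.prod_pos fun j _ => hm1 j.1 a j.2 _)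

end Pos

section Marg

variable [Nonempty X] (N : F → Finset V) (f : (a : F) → ({i // i ∈ N a} → X) → ℝ)
  (h : V → X → ℝ) (mva mav : V → F → X → ℝ)
  (hh : ∀ i x, 0 < h i x)
  (hf : ∀ a xa, 0 ≤ f a xa)
  (hslice : ∀ (a : F) (i : {i // i ∈ N a}) (z : X),
    ∃ xa : {i // i ∈ N a} → X, xa i = z ∧ 0 < f a xa)
  (hm1 : ∀ (i : V) (a : F), i ∈ N a → ∀ x, 0 < mva i a x)
  (hm2 : ∀ (i : V) (a : F), i ∈ N a → ∀ x, 0 < mav i a x)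
  (hfix2 : ∀ (i : V) (a : F) (hia : i ∈ N a), ∃ c : ℝ, 0 < c ∧ ∀ x,
    mav i a x = c * ∑ xa ∈ Finset.univ.filter
        (fun xa : {j // j ∈ N a} → X => xa ⟨i, hia⟩ = x),
      f a xa * ∏ j ∈ Finset.univ.erase (⟨i, hia⟩ : {j // j ∈ N a}), mva j.1 a (xa j))
  (hbic : ∀ (i : V) (a : F) (hia : i ∈ N a) (x : X),
    bvi N h mav i x = mva i a x * mav i a x / Zia mva mav i a)

include hh hf hslice hm1 hm2 hfix2 hbic in
lemma bfa_marginal (i : V) (a : F) (hia : i ∈ N a) (x : X) :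
    ∑ xa ∈ univ.filter (fun xa : {j // j ∈ N a} → X => xa ⟨i, hia⟩ = x),
      bfa N f mva a xa = bvi N h mav i x := by
  obtain ⟨c, hc, hmav⟩ := hfix2 i a hia
  have hZa : 0 < Za N f mva a := Za_pos N f mva hf hslice hm1 a i hia
  have hS : ∀ y : X, ∑ xa ∈ univ.filter (fun xa : {j // j ∈ N a} → X => xa ⟨i, hia⟩ = y),
      (f a xa * ∏ j : {j // j ∈ N a}, mva j.1 a (xa j))
        = mva i a y * (mav i a y / c) := by
    intro y
    have hterm : ∀ xa ∈ univ.filter (fun xa : {j // j ∈ N a} → X => xa ⟨i, hia⟩ = y),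
        f a xa * ∏ j : {j // j ∈ N a}, mva j.1 a (xa j)
          = mva i a y * (f a xa * ∏ j ∈ univ.erase (⟨i, hia⟩ : {j // j ∈ N a}),
              mva j.1 a (xa j)) := by
      intro xa hxa
      rw [mem_filter] at hxa
      rw [← Finset.mul_prod_erase univ _ (mem_univ (⟨i, hia⟩ : {j // j ∈ N a})), hxa.2]
      ring
    rw [Finset.sum_congr rfl hterm, ← Finset.mul_sum]
    congr 1
    rw [eq_div_iff hc.ne', hmav y]
    ring
  have hZaS : c * Za N f mva a = Zia mva mav i a := by
    rw [Za, ← Finset.sum_fiberwise univ (fun xa : {j // j ∈ N a} → X => xa ⟨i, hia⟩)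
      (fun xa => f a xa * ∏ j : {j // j ∈ N a}, mva j.1 a (xa j)), Finset.mul_sum, Zia]
    refine Finset.sum_congr rfl fun y _ => ?_
    rw [hS y]
    field_simp
  have hZia : 0 < Zia mva mav i a := hZaS ▸ mul_pos hc hZa
  have : ∑ xa ∈ univ.filter (fun xa : {j // j ∈ N a} → X => xa ⟨i, hia⟩ = x),
      bfa N f mva a xa
        = (∑ xa ∈ univ.filter (fun xa : {j // j ∈ N a} → X => xa ⟨i, hia⟩ = x),
            f a xa * ∏ j : {j // j ∈ N a}, mva j.1 a (xa j)) / Za N f mva a := by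
    rw [Finset.sum_div]
    rfl
  rw [this, hS x, hbic i a hia x, ← hZaS]
  field_simp

include hf in
lemma sum_bfa_eq (a : F) (p : ({j // j ∈ N a} → X) → Prop) [DecidablePred p]
    (g : ({j // j ∈ N a} → X) → ℝ) :
    ∑ xa ∈ univ.filter (fun xa => f a xa ≠ 0), bfa N f mva a xa * g xa
      = ∑ xa : {j // j ∈ N a} → X, bfa N f mva a xa * g xa := by
  refine Finset.sum_filter_of_ne fun xa _ hne => ?_
  intro hf0
  apply hne
  simp [bfa, hf0]

include hf hslice hm1 in
lemma sum_bfa_one (a : F) (i : V) (hia : i ∈ N a) :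
    ∑ xa ∈ univ.filter (fun xa : {j // j ∈ N a} → X => f a xa ≠ 0),
      bfa N f mva a xa = 1 := by
  have h1 : ∑ xa ∈ univ.filter (fun xa : {j // j ∈ N a} → X => f a xa ≠ 0),
      bfa N f mva a xa = ∑ xa : {j // j ∈ N a} → X, bfa N f mva a xa := by
    refine Finset.sum_filter_of_ne fun xa _ hne => ?_
    intro hf0
    apply hne
    simp [bfa, hf0]
  rw [h1]
  have hZa : 0 < Za N f mva a := Za_pos N f mva hf hslice hm1 a i hia
  simp only [bfa, ← Finset.sum_div]
  rw [← Za, div_self hZa.ne']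

include hh hf hslice hm1 hm2 hfix2 hbic in
lemma sum_bfa_log_mva (a : F) (j : {j // j ∈ N a}) :
    ∑ xa ∈ univ.filter (fun xa : {j // j ∈ N a} → X => f a xa ≠ 0),
      bfa N f mva a xa * Real.log (mva j.1 a (xa j))
      = ∑ x : X, bvi N h mav j.1 x * Real.log (mva j.1 a x) := by
  have h1 : ∑ xa ∈ univ.filter (fun xa : {j // j ∈ N a} → X => f a xa ≠ 0),
      bfa N f mva a xa * Real.log (mva j.1 a (xa j))
      = ∑ xa : {j // j ∈ N a} → X, bfa N f mva a xa * Real.log (mva j.1 a (xa j)) := by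
    refine Finset.sum_filter_of_ne fun xa _ hne => ?_
    intro hf0
    apply hne
    simp [bfa, hf0]
  rw [h1, ← Finset.sum_fiberwise univ (fun xa : {j // j ∈ N a} → X => xa j)
    (fun xa => bfa N f mva a xa * Real.log (mva j.1 a (xa j)))]
  refine Finset.sum_congr rfl fun x _ => ?_
  have h2 : ∀ xa ∈ univ.filter (fun xa : {j // j ∈ N a} → X => xa j = x),
      bfa N f mva a xa * Real.log (mva j.1 a (xa j))
        = bfa N f mva a xa * Real.log (mva j.1 a x) := by
    intro xa hxa
    rw [mem_filter] at hxa
    rw [hxa.2]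
  rw [Finset.sum_congr rfl h2, ← Finset.sum_mul]
  have := bfa_marginal N f h mva mav hh hf hslice hm1 hm2 hfix2 hbic j.1 a j.2 x
  simp only [Subtype.coe_eta] at this
  rw [this]

include hh hf hslice hm1 hm2 hfix2 hbic in
lemma claimA (a : F) :
    (∑ xa ∈ univ.filter (fun xa : {j // j ∈ N a} → X => f a xa ≠ 0),
        bfa N f mva a xa * Real.log (bfa N f mva a xa))
    - (∑ xa ∈ univ.filter (fun xa : {j // j ∈ N a} → X => f a xa ≠ 0),
        bfa N f mva a xa * Real.log (f a xa))
    = - Real.log (Za N f mva a)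
      + ∑ i ∈ N a, ∑ x : X, bvi N h mav i x * Real.log (mva i a x) := by
  rcases (N a).eq_empty_or_nonempty with hNa | ⟨i0, hi0⟩
  · -- empty factor
    haveI : IsEmpty {j // j ∈ N a} := ⟨fun j => by simpa [hNa] using j.2⟩
    haveI : Unique ({j // j ∈ N a} → X) := Pi.uniqueOfIsEmpty _
    have hZa : Za N f mva a = f a default := by
      rw [Za, Fintype.sum_unique]
      simp
    by_cases hf0 : f a default = 0
    · have hfil : univ.filter (fun xa : {j // j ∈ N a} → X => f a xa ≠ 0) = ∅ := by
        rw [Finset.univ_unique, Finset.filter_singleton]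
        simp [hf0]
      simp [Finset.univ_unique, Finset.filter_singleton, hf0, hZa, hNa]
    · have hfil : univ.filter (fun xa : {j // j ∈ N a} → X => f a xa ≠ 0) = {default} := by
        rw [Finset.univ_unique, Finset.filter_singleton]
        simp [hf0]
      have hb : bfa N f mva a default = 1 := by
        rw [bfa, hZa]
        simp [div_self hf0]
      simp [Finset.univ_unique, Finset.filter_singleton, hf0, hb, hZa, hNa]
  · -- nonempty factor
    have hZa : 0 < Za N f mva a := Za_pos N f mva hf hslice hm1 a i0 hi0
    have hlog : ∀ xa ∈ univ.filter (fun xa : {j // j ∈ N a} → X => f a xa ≠ 0),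
        bfa N f mva a xa * Real.log (bfa N f mva a xa)
          - bfa N f mva a xa * Real.log (f a xa)
        = (∑ j : {j // j ∈ N a}, bfa N f mva a xa * Real.log (mva j.1 a (xa j)))
          - bfa N f mva a xa * Real.log (Za N f mva a) := by
      intro xa hxa
      rw [mem_filter] at hxa
      have hfxa : 0 < f a xa := lt_of_le_of_ne (hf a xa) (Ne.symm hxa.2)
      have hP : 0 < ∏ j : {j // j ∈ N a}, mva j.1 a (xa j) :=
        Finset.prod_pos fun j _ => hm1 j.1 a j.2 _
      have : Real.log (bfa N f mva a xa)
          = Real.log (f a xa) + (∑ j : {j // j ∈ N a}, Real.log (mva j.1 a (xa j)))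
            - Real.log (Za N f mva a) := by
        rw [bfa, Real.log_div (by positivity) hZa.ne', Real.log_mul hfxa.ne' hP.ne',
          Real.log_prod fun j _ => (hm1 j.1 a j.2 _).ne']
      rw [this, mul_sub, mul_add, Finset.mul_sum]
      ring
    rw [← Finset.sum_sub_distrib, Finset.sum_congr rfl hlog, Finset.sum_sub_distrib,
      ← Finset.sum_mul, sum_bfa_one N f mva hf hslice hm1 a i0 hi0, one_mul,
      Finset.sum_comm]
    have : ∀ j : {j // j ∈ N a},
        ∑ xa ∈ univ.filter (fun xa : {j // j ∈ N a} → X => f a xa ≠ 0),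
          bfa N f mva a xa * Real.log (mva j.1 a (xa j))
        = ∑ x : X, bvi N h mav j.1 x * Real.log (mva j.1 a x) :=
      fun j => sum_bfa_log_mva N f h mva mav hh hf hslice hm1 hm2 hfix2 hbic a j
    rw [Finset.sum_congr rfl fun j _ => this j, Finset.sum_coe_sort (N a)
      (fun i => ∑ x : X, bvi N h mav i x * Real.log (mva i a x))]
    ring

end Marg

section BC

variable [Nonempty X] (N : F → Finset V) (h : V → X → ℝ) (mva mav : V → F → X → ℝ)
  (hh : ∀ i x, 0 < h i x)
  (hm1 : ∀ (i : V) (a : F), i ∈ N a → ∀ x, 0 < mva i a x)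
  (hm2 : ∀ (i : V) (a : F), i ∈ N a → ∀ x, 0 < mav i a x)
  (hbic : ∀ (i : V) (a : F) (hia : i ∈ N a) (x : X),
    bvi N h mav i x = mva i a x * mav i a x / Zia mva mav i a)

include hh hm2 in
lemma claimB (i : V) :
    ∑ x : X, bvi N h mav i x * Real.log (bvi N h mav i x)
      = (∑ x : X, bvi N h mav i x * Real.log (h i x))
        + (∑ a ∈ nbrs N i, ∑ x : X, bvi N h mav i x * Real.log (mav i a x))
        - Real.log (Zi N h mav i) := by
  have hZi : 0 < Zi N h mav i := Zi_pos N h mav hh hm2 i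
  have hmavpos : ∀ a ∈ nbrs N i, ∀ x : X, 0 < mav i a x := fun a ha x =>
    hm2 i a (by simpa [nbrs] using ha) x
  have hlog : ∀ x : X, bvi N h mav i x * Real.log (bvi N h mav i x)
      = bvi N h mav i x * Real.log (h i x)
        + (∑ a ∈ nbrs N i, bvi N h mav i x * Real.log (mav i a x))
        - bvi N h mav i x * Real.log (Zi N h mav i) := by
    intro x
    have hP : 0 < ∏ a ∈ nbrs N i, mav i a x := Finset.prod_pos fun a ha => hmavpos a ha x
    have : Real.log (bvi N h mav i x)
        = Real.log (h i x) + (∑ a ∈ nbrs N i, Real.log (mav i a x))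
          - Real.log (Zi N h mav i) := by
      rw [bvi, Real.log_div (mul_pos (hh i x) hP).ne' hZi.ne',
        Real.log_mul (hh i x).ne' hP.ne',
        Real.log_prod fun a ha => (hmavpos a ha x).ne']
    rw [this, mul_sub, mul_add, Finset.mul_sum]
  rw [Finset.sum_congr rfl fun x _ => hlog x, Finset.sum_sub_distrib,
    Finset.sum_add_distrib, ← Finset.sum_mul, sum_bvi N h mav hh hm2 i, one_mul,
    Finset.sum_comm]

include hh hm1 hm2 hbic in
lemma claimC (i : V) (a : F) (hia : i ∈ N a) :
    ∑ x : X, bvi N h mav i x * Real.log (bvi N h mav i x)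
      = (∑ x : X, bvi N h mav i x * Real.log (mva i a x))
        + (∑ x : X, bvi N h mav i x * Real.log (mav i a x))
        - Real.log (Zia mva mav i a) := by
  have hZia : 0 < Zia mva mav i a :=
    Finset.sum_pos (fun x _ => mul_pos (hm1 i a hia x) (hm2 i a hia x)) univ_nonempty
  have hlog : ∀ x : X, bvi N h mav i x * Real.log (bvi N h mav i x)
      = bvi N h mav i x * Real.log (mva i a x)
        + bvi N h mav i x * Real.log (mav i a x)
        - bvi N h mav i x * Real.log (Zia mva mav i a) := by
    intro x
    have : Real.log (bvi N h mav i x)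
        = Real.log (mva i a x) + Real.log (mav i a x) - Real.log (Zia mva mav i a) := by
      rw [hbic i a hia x,
        Real.log_div (mul_pos (hm1 i a hia x) (hm2 i a hia x)).ne' hZia.ne',
        Real.log_mul (hm1 i a hia x).ne' (hm2 i a hia x).ne']
    rw [this]
    ring
  rw [Finset.sum_congr rfl fun x _ => hlog x, Finset.sum_sub_distrib,
    Finset.sum_add_distrib, ← Finset.sum_mul, sum_bvi N h mav hh hm2 i, one_mul]

end BC

lemma claimA0 [IsEmpty X] (N : F → Finset V) (f : (a : F) → ({i // i ∈ N a} → X) → ℝ)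
    (mva : V → F → X → ℝ) (a : F) :
    (∑ xa ∈ univ.filter (fun xa : {j // j ∈ N a} → X => f a xa ≠ 0),
        bfa N f mva a xa * Real.log (bfa N f mva a xa))
    - (∑ xa ∈ univ.filter (fun xa : {j // j ∈ N a} → X => f a xa ≠ 0),
        bfa N f mva a xa * Real.log (f a xa))
    = - Real.log (Za N f mva a) := by
  rcases (N a).eq_empty_or_nonempty with hNa | ⟨i0, hi0⟩
  · haveI : IsEmpty {j // j ∈ N a} := ⟨fun j => by simpa [hNa] using j.2⟩
    haveI : Unique ({j // j ∈ N a} → X) := Pi.uniqueOfIsEmpty _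
    have hZa : Za N f mva a = f a default := by
      rw [Za, Fintype.sum_unique]
      simp
    by_cases hf0 : f a default = 0
    · simp [Finset.univ_unique, Finset.filter_singleton, hf0, hZa]
    · have hb : bfa N f mva a default = 1 := by
        rw [bfa, hZa]
        simp [div_self hf0]
      simp [Finset.univ_unique, Finset.filter_singleton, hf0, hb, hZa]
  · haveI : IsEmpty ({j // j ∈ N a} → X) := ⟨fun xa => IsEmpty.false (xa ⟨i0, hi0⟩)⟩
    have hZa : Za N f mva a = 0 := by
      rw [Za]
      simp
    simp [hZa]


/-- **Bethe free energy at a stationary point.**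
At a positive BP fixed point, `F_Bethe = −∑_a log Z_a − ∑_i log Z_i + ∑_{(i,a)∈E} log Z_{i,a}`. -/
theorem bethe_free_energy_at_stationary_point
    (N : F → Finset V)
    (f : (a : F) → ({i // i ∈ N a} → X) → ℝ)
    (h : V → X → ℝ)
    (mva mav : V → F → X → ℝ)
    (hh : ∀ i x, 0 < h i x)
    (hf : ∀ a xa, 0 ≤ f a xa)
    (hslice : ∀ (a : F) (i : {i // i ∈ N a}) (z : X),
      ∃ xa : {i // i ∈ N a} → X, xa i = z ∧ 0 < f a xa)
    (hm1 : ∀ (i : V) (a : F), i ∈ N a → ∀ x, 0 < mva i a x)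
    (hm2 : ∀ (i : V) (a : F), i ∈ N a → ∀ x, 0 < mav i a x)
    (hfix1 : ∀ (i : V) (a : F), i ∈ N a → ∃ c : ℝ, 0 < c ∧ ∀ x,
      mva i a x = c * (h i x * ∏ a' ∈ (nbrs N i).erase a, mav i a' x))
    (hfix2 : ∀ (i : V) (a : F) (hia : i ∈ N a), ∃ c : ℝ, 0 < c ∧ ∀ x,
      mav i a x = c * ∑ xa ∈ Finset.univ.filter
          (fun xa : {j // j ∈ N a} → X => xa ⟨i, hia⟩ = x),
        f a xa * ∏ j ∈ Finset.univ.erase (⟨i, hia⟩ : {j // j ∈ N a}), mva j.1 a (xa j))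
    (hbic : ∀ (i : V) (a : F) (hia : i ∈ N a) (x : X),
      bvi N h mav i x = mva i a x * mav i a x / Zia mva mav i a) :
    UBethe N f h mva mav - HBethe N f h mva mav
      = - (∑ a : F, Real.log (Za N f mva a)) - (∑ i : V, Real.log (Zi N h mav i))
        + ∑ p ∈ edges N, Real.log (Zia mva mav p.1 p.2) := by

  rcases isEmpty_or_nonempty X with hX | hX
  · -- X is empty: all variable sums vanish
    have hx0 : ∀ g : X → ℝ, ∑ x : X, g x = 0 := fun g => by simp
    have hzi : ∀ i : V, Real.log (Zi N h mav i) = 0 := fun i => by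
      rw [Zi, hx0]
      exact Real.log_zero
    have hzia : ∀ (i : V) (a : F), Real.log (Zia mva mav i a) = 0 := fun i a => by
      rw [Zia, hx0]
      exact Real.log_zero
    have h4 : ∑ a : F,
        ((∑ xa ∈ univ.filter (fun xa : {j // j ∈ N a} → X => f a xa ≠ 0),
            bfa N f mva a xa * Real.log (bfa N f mva a xa))
          - (∑ xa ∈ univ.filter (fun xa : {j // j ∈ N a} → X => f a xa ≠ 0),
            bfa N f mva a xa * Real.log (f a xa)))
        = ∑ a : F, -Real.log (Za N f mva a) :=
      Finset.sum_congr rfl fun a _ => claimA0 N f mva a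
    rw [Finset.sum_sub_distrib, Finset.sum_neg_distrib] at h4
    simp only [UBethe, HBethe, hx0, mul_zero, Finset.sum_const_zero, sub_zero,
      add_zero, neg_zero, hzi, hzia]
    linarith
  · have hA := claimA N f h mva mav hh hf hslice hm1 hm2 hfix2 hbic
    have hB := claimB N h mav hh hm2
    have hC : ∀ (i : V) (a : F), i ∈ N a →
        ∑ x : X, bvi N h mav i x * Real.log (bvi N h mav i x)
          = (∑ x : X, bvi N h mav i x * Real.log (mva i a x))
            + (∑ x : X, bvi N h mav i x * Real.log (mav i a x))
            - Real.log (Zia mva mav i a) :=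
      fun i a hia => claimC N h mva mav hh hm1 hm2 hbic i a hia
    -- the D-term
    have hcard : ∀ i : V, ((nbrs N i).card - 1 : ℝ) *
        ∑ x : X, bvi N h mav i x * Real.log (bvi N h mav i x)
        = (∑ a ∈ nbrs N i,
            ((∑ x : X, bvi N h mav i x * Real.log (mva i a x))
              + (∑ x : X, bvi N h mav i x * Real.log (mav i a x))
              - Real.log (Zia mva mav i a)))
          - ((∑ x : X, bvi N h mav i x * Real.log (h i x))
            + (∑ a ∈ nbrs N i, ∑ x : X, bvi N h mav i x * Real.log (mav i a x))
            - Real.log (Zi N h mav i)) := by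
      intro i
      have h1 : ((nbrs N i).card : ℝ) *
          ∑ x : X, bvi N h mav i x * Real.log (bvi N h mav i x)
          = ∑ a ∈ nbrs N i, ∑ x : X, bvi N h mav i x * Real.log (bvi N h mav i x) := by
        rw [Finset.sum_const, nsmul_eq_mul]
      have h2 : ∑ a ∈ nbrs N i, ∑ x : X, bvi N h mav i x * Real.log (bvi N h mav i x)
          = ∑ a ∈ nbrs N i,
            ((∑ x : X, bvi N h mav i x * Real.log (mva i a x))
              + (∑ x : X, bvi N h mav i x * Real.log (mav i a x))
              - Real.log (Zia mva mav i a)) :=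
        Finset.sum_congr rfl fun a ha => hC i a (by simpa [nbrs] using ha)
      rw [sub_mul, one_mul, h1, h2, hB i]
    have hCsum : ∑ a : F,
        (∑ xa ∈ univ.filter (fun xa : {j // j ∈ N a} → X => f a xa ≠ 0),
            bfa N f mva a xa * Real.log (bfa N f mva a xa))
        = (∑ a : F,
            ∑ xa ∈ univ.filter (fun xa : {j // j ∈ N a} → X => f a xa ≠ 0),
              bfa N f mva a xa * Real.log (f a xa))
          - (∑ a : F, Real.log (Za N f mva a))
          + ∑ i : V, ∑ a ∈ nbrs N i,
              ∑ x : X, bvi N h mav i x * Real.log (mva i a x) := by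
      have : ∑ a : F,
          (∑ xa ∈ univ.filter (fun xa : {j // j ∈ N a} → X => f a xa ≠ 0),
              bfa N f mva a xa * Real.log (bfa N f mva a xa))
          = ∑ a : F,
            ((∑ xa ∈ univ.filter (fun xa : {j // j ∈ N a} → X => f a xa ≠ 0),
                bfa N f mva a xa * Real.log (f a xa))
              - Real.log (Za N f mva a)
              + ∑ i ∈ N a, ∑ x : X, bvi N h mav i x * Real.log (mva i a x)) :=
        Finset.sum_congr rfl fun a _ => by linarith [hA a]
      rw [this, Finset.sum_add_distrib, Finset.sum_sub_distrib,
        ← sum_edges_eq_fac N (fun i a => ∑ x : X, bvi N h mav i x * Real.log (mva i a x)),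
        sum_edges_eq_nbrs N (fun i a => ∑ x : X, bvi N h mav i x * Real.log (mva i a x))]
    have hDsum : ∑ i : V, ((nbrs N i).card - 1 : ℝ) *
        ∑ x : X, bvi N h mav i x * Real.log (bvi N h mav i x)
        = ((∑ i : V, ∑ a ∈ nbrs N i,
              ∑ x : X, bvi N h mav i x * Real.log (mva i a x))
            + (∑ i : V, ∑ a ∈ nbrs N i,
              ∑ x : X, bvi N h mav i x * Real.log (mav i a x))
            - ∑ i : V, ∑ a ∈ nbrs N i, Real.log (Zia mva mav i a))
          - ((∑ i : V, ∑ x : X, bvi N h mav i x * Real.log (h i x))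
            + (∑ i : V, ∑ a ∈ nbrs N i,
              ∑ x : X, bvi N h mav i x * Real.log (mav i a x))
            - ∑ i : V, Real.log (Zi N h mav i)) := by
      rw [Finset.sum_congr rfl fun i _ => hcard i]
      simp only [Finset.sum_add_distrib, Finset.sum_sub_distrib]
    simp only [UBethe, HBethe]
    rw [sum_edges_eq_nbrs N (fun i a => Real.log (Zia mva mav i a))]
    linarith [hCsum, hDsum]
end
end
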